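/- There exists a constant β_θ > 0, depending only on βmax, l and T, with β_θ ≥ βmax, such that for every initial output y₀ ∈ ℝ and every pair of input sequences u = (u(0),…,u(T−1)) and u' = (u'(0),…,u'(T−1)) with corresponding outputs y and y' generated by system (1), there exist real numbers θ_t(ξ) for 0 ≤ ξ ≤ t ≤ T−1 satisfying: (i) y(t+1) − y'(t+1) = Σ_{ξ=0}^{t} θ_t(ξ)·(u(ξ) − u'(ξ)) for every t ∈ {0,…,T−1}; (ii) |θ_t(ξ)| ≤ β_θ for all 0 ≤ ξ ≤ t ≤ T−1; and (iii) θ_t(t) ∈ [βmin, βmax] for every t ∈ {0,…,T−1}. -/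

import Mathlib

/-- The argument vector `(y(t),…,y(t−l), u(t),…,u(t−n))` fed to the nonlinearity of
system (1), with the conventions `y(i) = 0` and `u(i) = 0` for `i < 0`. -/
def sysArg (l n : ℕ) (y u : ℕ → ℝ) (t : ℕ) : Fin (l + n + 2) → ℝ :=
  fun j =>
    if (j : ℕ) ≤ l then (if (j : ℕ) ≤ t then y (t - (j : ℕ)) else 0)
    else (if (j : ℕ) - (l + 1) ≤ t then u (t - ((j : ℕ) - (l + 1))) else 0)

/-- `y` is the output trajectory of system (1) generated by the nonlinearity `f`,
the initial output `y₀` and the input sequence `u`. -/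
def IsTraj (l n T : ℕ) (f : (Fin (l + n + 2) → ℝ) → ℕ → ℝ) (y₀ : ℝ)
    (u y : ℕ → ℝ) : Prop :=
  y 0 = y₀ ∧ ∀ t, t < T → y (t + 1) = f (sysArg l n y u t) t

open Finset in
private lemma mvt_coord {m : ℕ} (F : (Fin m → ℝ) → ℝ) (hF : ContDiff ℝ 1 F)
    (z : Fin m → ℝ) (i : Fin m) (s t : ℝ) :
    ∃ x : Fin m → ℝ,
      F (Function.update z i s) - F (Function.update z i t)
        = fderiv ℝ F x (Pi.single i 1) * (s - t) := by
  have hg : ∀ r : ℝ, HasDerivAt (fun r => F (Function.update z i r))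
      (fderiv ℝ F (Function.update z i r) (Pi.single i 1)) r := by
    intro r
    have hφ : HasDerivAt (fun r : ℝ => Function.update z i r) (Pi.single i 1) r := by
      have heq : (fun r : ℝ => Function.update z i r) =
          fun r : ℝ => Function.update z i (0:ℝ) + r • (Pi.single i (1:ℝ) : Fin m → ℝ) := by
        funext r j
        by_cases h : j = i
        · subst h; simp
        · simp [Function.update_of_ne h, Pi.single_apply, h]
      rw [heq]
      simpa using ((hasDerivAt_id' (x := r)).smul_const
        ((Pi.single i (1:ℝ) : Fin m → ℝ))).const_add (Function.update z i (0:ℝ))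
    exact ((hF.differentiable one_ne_zero _).hasFDerivAt).comp_hasDerivAt r hφ
  rcases lt_trichotomy s t with h | h | h
  · obtain ⟨ζ, hζ, hval⟩ := exists_hasDerivAt_eq_slope _ _ h
      (fun r _ => (hg r).continuousAt.continuousWithinAt) (fun r _ => hg r)
    refine ⟨Function.update z i ζ, ?_⟩
    rw [hval, div_mul_eq_mul_div, eq_div_iff (sub_ne_zero.2 h.ne')]
    ring
  · exact ⟨z, by rw [h]; ring⟩
  · obtain ⟨ζ, hζ, hval⟩ := exists_hasDerivAt_eq_slope _ _ h
      (fun r _ => (hg r).continuousAt.continuousWithinAt) (fun r _ => hg r)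
    refine ⟨Function.update z i ζ, ?_⟩
    rw [hval, div_mul_eq_mul_div, eq_div_iff (sub_ne_zero.2 h.ne')]

open Finset in
private lemma mvt_multi {m : ℕ} (F : (Fin m → ℝ) → ℝ) (hF : ContDiff ℝ 1 F)
    (βmin βmax : ℝ) (i0 : Fin m)
    (hb : ∀ x i, |fderiv ℝ F x (Pi.single i 1)| ≤ βmax)
    (h0 : ∀ x, fderiv ℝ F x (Pi.single i0 1) ∈ Set.Icc βmin βmax)
    (a b : Fin m → ℝ) :
    ∃ c : Fin m → ℝ, F a - F b = ∑ i, c i * (a i - b i) ∧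
      (∀ i, |c i| ≤ βmax) ∧ c i0 ∈ Set.Icc βmin βmax := by
  set z : ℕ → Fin m → ℝ := fun k j => if (j : ℕ) < k then a j else b j with hz
  have hza : z m = a := by funext j; simp [hz, j.isLt]
  have hzb : z 0 = b := by funext j; simp [hz]
  have hstep : ∀ i : Fin m, ∃ d : ℝ,
      (F (z ((i:ℕ)+1)) - F (z (i:ℕ)) = d * (a i - b i)) ∧ |d| ≤ βmax ∧
        (i = i0 → d ∈ Set.Icc βmin βmax) := by
    intro i
    have h1 : z ((i:ℕ)+1) = Function.update (z (i:ℕ)) i (a i) := by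
      funext j
      rcases eq_or_ne j i with rfl | hji
      · simp [hz]
      · have hv : (j:ℕ) ≠ (i:ℕ) := fun hh => hji (Fin.ext hh)
        rw [Function.update_of_ne hji]
        simp only [hz]
        split_ifs <;> first | rfl | omega
    have h2 : z (i:ℕ) = Function.update (z (i:ℕ)) i (b i) := by
      funext j
      rcases eq_or_ne j i with rfl | hji
      · simp [hz]
      · rw [Function.update_of_ne hji]
    obtain ⟨x, hx⟩ := mvt_coord F hF (z (i:ℕ)) i (a i) (b i)
    refine ⟨fderiv ℝ F x (Pi.single i 1), ?_, hb x i, fun hii => by rw [hii]; exact h0 x⟩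
    rw [h1]
    nth_rewrite 2 [h2]
    exact hx
  choose c hc1 hc2 hc3 using hstep
  refine ⟨c, ?_, hc2, hc3 i0 rfl⟩
  calc F a - F b = ∑ k ∈ range m, (F (z (k+1)) - F (z k)) := by
        rw [Finset.sum_range_sub (fun k => F (z k)) m, hza, hzb]
    _ = ∑ i : Fin m, (F (z ((i:ℕ)+1)) - F (z (i:ℕ))) :=
        (Fin.sum_univ_eq_sum_range (fun k => F (z (k+1)) - F (z k)) m).symm
    _ = ∑ i : Fin m, c i * (a i - b i) := Finset.sum_congr rfl fun i _ => hc1 i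

open Finset in
/-- Lemma 1 of the paper: extended dynamical linearization of system (1) under
Assumption (A1), with a bound `β_θ` depending only on `βmax`, `l` and `T`. -/
theorem stmt1 (l n T : ℕ) (hT : 1 ≤ T) (βmin βmax : ℝ)
    (hβmin : 0 < βmin) (hββ : βmin ≤ βmax) :
    ∃ βθ : ℝ, 0 < βθ ∧ βmax ≤ βθ ∧
      ∀ f : (Fin (l + n + 2) → ℝ) → ℕ → ℝ,
        (∀ t, t < T → ContDiff ℝ 1 fun x => f x t) →
        (∀ t, t < T → ∀ x, ∀ i, |fderiv ℝ (fun x => f x t) x (Pi.single i 1)| ≤ βmax) →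
        (∀ t, t < T → ∀ x,
          fderiv ℝ (fun x => f x t) x
              (Pi.single (⟨l + 1, by omega⟩ : Fin (l + n + 2)) 1)
            ∈ Set.Icc βmin βmax) →
        ∀ (y₀ : ℝ) (u u' y y' : ℕ → ℝ),
          IsTraj l n T f y₀ u y → IsTraj l n T f y₀ u' y' →
          ∃ θ : ℕ → ℕ → ℝ,
            (∀ t, t < T →
              y (t + 1) - y' (t + 1)
                = ∑ ξ ∈ Finset.range (t + 1), θ t ξ * (u ξ - u' ξ)) ∧
            (∀ t, t < T → ∀ ξ, ξ ≤ t → |θ t ξ| ≤ βθ) ∧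
            (∀ t, t < T → θ t t ∈ Set.Icc βmin βmax) := by
  have hβmax : 0 < βmax := lt_of_lt_of_le hβmin hββ
  set C : ℝ := (l + 1 : ℝ) * βmax + 1 with hCdef
  have hC1 : (1:ℝ) ≤ C := by
    have h1 : (0:ℝ) ≤ (l + 1 : ℝ) * βmax := by positivity
    simp only [hCdef]; linarith
  have hCpow : ∀ s : ℕ, (1:ℝ) ≤ C ^ s := fun s => one_le_pow₀ hC1
  set B : ℕ → ℝ := fun s => (n + 1 : ℝ) * βmax * C ^ s with hBdef
  have hBpos : ∀ s, 0 < B s := by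
    intro s
    have : (0:ℝ) < C ^ s := lt_of_lt_of_le one_pos (hCpow s)
    simp only [hBdef]; positivity
  have hBmono : ∀ s₁ s₂, s₁ ≤ s₂ → B s₁ ≤ B s₂ := by
    intro s₁ s₂ h
    have : C ^ s₁ ≤ C ^ s₂ := pow_le_pow_right₀ hC1 h
    simp only [hBdef]
    have h2 : (0:ℝ) ≤ (n + 1 : ℝ) * βmax := by positivity
    nlinarith
  refine ⟨(n + 1 : ℝ) * βmax * C ^ T, ?_, ?_, ?_⟩
  · have : (0:ℝ) < C ^ T := lt_of_lt_of_le one_pos (hCpow T)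
    positivity
  · have h1 : (1:ℝ) ≤ C ^ T := hCpow T
    have h2 : (1:ℝ) ≤ (n + 1 : ℝ) := by
      have : (0:ℝ) ≤ (n:ℝ) := Nat.cast_nonneg n
      linarith
    have h3 : βmax * 1 ≤ βmax * C ^ T := mul_le_mul_of_nonneg_left h1 hβmax.le
    have h4 : (1:ℝ) * (βmax * C ^ T) ≤ (n + 1 : ℝ) * (βmax * C ^ T) :=
      mul_le_mul_of_nonneg_right h2 (by nlinarith)
    nlinarith [h3, h4]
  intro f hf hb h0 y₀ u u' y y' hy hy'
  have main : ∀ t, t < T → ∃ row : ℕ → ℝ,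
      (y (t+1) - y' (t+1) = ∑ ξ ∈ range (t+1), row ξ * (u ξ - u' ξ)) ∧
      (∀ ξ, |row ξ| ≤ B t) ∧ row t ∈ Set.Icc βmin βmax := by
    intro t
    induction t using Nat.strong_induction_on with
    | _ t ih =>
    intro ht
    have hprev : ∀ s : ℕ, ∃ row : ℕ → ℝ, s < t →
        (y (s+1) - y' (s+1) = ∑ ξ ∈ range (s+1), row ξ * (u ξ - u' ξ)) ∧
        (∀ ξ, |row ξ| ≤ B s) := by
      intro s
      by_cases hs : s < t
      · obtain ⟨row, h1, h2, _⟩ := ih s hs (hs.trans ht)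
        exact ⟨row, fun _ => ⟨h1, h2⟩⟩
      · exact ⟨0, fun h => absurd h hs⟩
    choose rows hrows using hprev
    obtain ⟨c, hsum, hcb, hc0⟩ := mvt_multi (fun x => f x t) (hf t ht) βmin βmax
      ⟨l + 1, by omega⟩ (hb t ht) (h0 t ht) (sysArg l n y u t) (sysArg l n y' u' t)
    set cN : ℕ → ℝ := fun j => if h : j < l + n + 2 then c ⟨j, h⟩ else 0 with hcN
    set V : ℕ → ℕ → ℝ := fun j ξ =>
      if j ≤ l then (if j ≤ t ∧ ξ < t - j then rows (t - j - 1) ξ else 0)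
      else (if j - (l+1) ≤ t ∧ ξ = t - (j - (l+1)) then 1 else 0) with hV
    have hcset : ∀ i : Fin (l + n + 2), cN (i : ℕ) = c i := by
      intro i
      simp only [hcN, dif_pos i.isLt, Fin.eta]
    have hyd : ∀ s, s ≤ t → y s - y' s
        = ∑ ξ ∈ range (t+1), (if ξ < s then rows (s-1) ξ else 0) * (u ξ - u' ξ) := by
      intro s hs
      cases s with
      | zero =>
        rw [hy.1, hy'.1, sub_self]
        simp
      | succ s' =>
        have hs' : s' < t := by omega
        obtain ⟨h1, _⟩ := hrows s' hs'
        rw [h1]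
        have hsub : range (s'+1) ⊆ range (t+1) := by
          intro x hx; simp only [mem_range] at *; omega
        rw [← Finset.sum_subset hsub (fun x _ hx => ?_)]
        · refine Finset.sum_congr rfl fun ξ hξ => ?_
          simp only [mem_range] at hξ
          rw [if_pos (by omega : ξ < s' + 1)]
          simp
        · simp only [mem_range] at hx
          rw [if_neg (by omega : ¬ x < s' + 1), zero_mul]
    have hA : ∀ i : Fin (l + n + 2),
        sysArg l n y u t i - sysArg l n y' u' t i
          = ∑ ξ ∈ range (t+1), V (i : ℕ) ξ * (u ξ - u' ξ) := by
      intro i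
      by_cases hjl : (i : ℕ) ≤ l
      · by_cases hjt : (i : ℕ) ≤ t
        · have h1 := hyd (t - (i : ℕ)) (by omega)
          simp only [sysArg, if_pos hjl, if_pos hjt]
          rw [h1]
          refine Finset.sum_congr rfl fun ξ _ => ?_
          simp only [hV, if_pos hjl, hjt, true_and]
        · simp only [sysArg, if_pos hjl, if_neg hjt, sub_zero, sub_self]
          symm
          refine Finset.sum_eq_zero fun ξ _ => ?_
          simp only [hV, if_pos hjl, hjt, false_and, if_false, zero_mul]
      · by_cases hkt : (i : ℕ) - (l+1) ≤ t
        · simp only [sysArg, if_neg hjl, if_pos hkt]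
          have hcg : ∀ ξ ∈ range (t+1),
              V (i : ℕ) ξ * (u ξ - u' ξ)
                = if ξ = t - ((i:ℕ) - (l+1)) then (u ξ - u' ξ) else 0 := by
            intro ξ _
            simp only [hV, if_neg hjl, hkt, true_and]
            split_ifs <;> simp
          rw [Finset.sum_congr rfl hcg, Finset.sum_ite_eq' (range (t+1))]
          rw [if_pos (by simp only [mem_range]; omega)]
        · simp only [sysArg, if_neg hjl, if_neg hkt, sub_self]
          symm
          refine Finset.sum_eq_zero fun ξ _ => ?_
          simp only [hV, if_neg hjl, hkt, false_and, if_false, zero_mul]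
    refine ⟨fun ξ => ∑ j ∈ range (l+n+2), cN j * V j ξ, ?_, ?_, ?_⟩
    · calc y (t+1) - y' (t+1)
          = ∑ i : Fin (l+n+2), c i * (sysArg l n y u t i - sysArg l n y' u' t i) := by
            rw [hy.2 t ht, hy'.2 t ht]; exact hsum
        _ = ∑ i : Fin (l+n+2), ∑ ξ ∈ range (t+1),
              cN (i : ℕ) * V (i : ℕ) ξ * (u ξ - u' ξ) := by
            refine Finset.sum_congr rfl fun i _ => ?_
            rw [hA i, Finset.mul_sum, hcset i]
            exact Finset.sum_congr rfl fun ξ _ => by ring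
        _ = ∑ ξ ∈ range (t+1), ∑ i : Fin (l+n+2),
              cN (i : ℕ) * V (i : ℕ) ξ * (u ξ - u' ξ) := Finset.sum_comm
        _ = ∑ ξ ∈ range (t+1), (∑ j ∈ range (l+n+2), cN j * V j ξ) * (u ξ - u' ξ) := by
            refine Finset.sum_congr rfl fun ξ _ => ?_
            rw [Finset.sum_mul,
              ← Fin.sum_univ_eq_sum_range (fun j => cN j * V j ξ * (u ξ - u' ξ))]
    · -- bound
      intro ξ
      set Bprev : ℝ := if t = 0 then 0 else B (t-1) with hBprev
      have hBprev0 : (0:ℝ) ≤ Bprev := by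
        simp only [hBprev]; split_ifs
        · exact le_refl 0
        · exact (hBpos _).le
      have hcNb : ∀ j ∈ range (l+n+2), |cN j| ≤ βmax := by
        intro j hj
        have hj' : j < l+n+2 := mem_range.1 hj
        simp only [hcN, dif_pos hj']
        exact hcb _
      have hterm : ∀ j ∈ range (l+n+2), |cN j * V j ξ|
          ≤ if j ≤ l then βmax * Bprev else βmax := by
        intro j hj
        rw [abs_mul]
        by_cases hjl : j ≤ l
        · rw [if_pos hjl]
          by_cases hcnd : j ≤ t ∧ ξ < t - j
          · have h1 : t - j - 1 < t := by omega
            have h2 : |V j ξ| ≤ B (t-1) := by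
              simp only [hV, if_pos hjl, if_pos hcnd]
              exact ((hrows _ h1).2 ξ).trans (hBmono _ _ (by omega))
            have h3 : Bprev = B (t-1) := by
              simp only [hBprev]; rw [if_neg (by omega)]
            rw [h3]
            exact mul_le_mul (hcNb j hj) h2 (abs_nonneg _) hβmax.le
          · have hz : V j ξ = 0 := by simp only [hV, if_pos hjl, if_neg hcnd]
            rw [hz, abs_zero, mul_zero]
            positivity
        · rw [if_neg hjl]
          have h2 : |V j ξ| ≤ 1 := by
            simp only [hV, if_neg hjl]
            split_ifs <;> simp
          calc |cN j| * |V j ξ| ≤ βmax * 1 :=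
              mul_le_mul (hcNb j hj) h2 (abs_nonneg _) hβmax.le
            _ = βmax := mul_one βmax
      calc |∑ j ∈ range (l+n+2), cN j * V j ξ|
          ≤ ∑ j ∈ range (l+n+2), |cN j * V j ξ| := Finset.abs_sum_le_sum_abs _ _
        _ ≤ ∑ j ∈ range (l+n+2), (if j ≤ l then βmax * Bprev else βmax) :=
            Finset.sum_le_sum hterm
        _ = (l+1 : ℝ) * (βmax * Bprev) + (n+1 : ℝ) * βmax := by
            have he : l + n + 2 = (l+1) + (n+1) := by omega
            rw [he, Finset.sum_range_add]
            have e1 : ∑ j ∈ range (l+1), (if j ≤ l then βmax * Bprev else βmax)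
                = (l+1 : ℝ) * (βmax * Bprev) := by
              rw [Finset.sum_congr rfl fun j hj =>
                if_pos (by simp only [mem_range] at hj; omega)]
              rw [Finset.sum_const, Finset.card_range, nsmul_eq_mul]
              push_cast; ring
            have e2 : ∑ k ∈ range (n+1), (if (l+1) + k ≤ l then βmax * Bprev else βmax)
                = (n+1 : ℝ) * βmax := by
              rw [Finset.sum_congr rfl fun k hk => if_neg (by omega)]
              rw [Finset.sum_const, Finset.card_range, nsmul_eq_mul]
              push_cast; ring
            rw [e1, e2]
        _ ≤ B t := by
            rcases Nat.eq_zero_or_pos t with ht0 | ht0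
            · subst ht0
              have h3 : Bprev = 0 := by simp [hBprev]
              simp only [h3, hBdef, pow_zero, mul_zero, zero_add, mul_one]
              exact le_refl _
            · have h3 : Bprev = B (t-1) := by
                simp only [hBprev]; rw [if_neg (by omega)]
              have h4 : C ^ t = C ^ (t-1) * C := by
                conv_lhs => rw [show t = (t-1)+1 by omega]
                rw [pow_succ]
              simp only [h3, hBdef, h4, hCdef]
              have hP := hCpow (t-1)
              have hn0 : (0:ℝ) ≤ (n:ℝ) := Nat.cast_nonneg n
              have hl0 : (0:ℝ) ≤ (l:ℝ) := Nat.cast_nonneg l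
              nlinarith [mul_nonneg (mul_nonneg (by linarith : (0:ℝ) ≤ (n:ℝ)+1) hβmax.le)
                (sub_nonneg.2 hP)]
    · -- diagonal
      have hmem : l + 1 ∈ range (l+n+2) := mem_range.2 (by omega)
      have hone : V (l+1) t = 1 := by
        simp only [hV]
        rw [if_neg (by omega : ¬ l + 1 ≤ l),
          if_pos (by omega : (l+1)-(l+1) ≤ t ∧ t = t - ((l+1)-(l+1)))]
      have hsingle : ∑ j ∈ range (l+n+2), cN j * V j t = cN (l+1) := by
        rw [Finset.sum_eq_single_of_mem (l+1) hmem]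
        · rw [hone, mul_one]
        · intro j hj hne
          have hj' : j < l + n + 2 := mem_range.1 hj
          have hz : V j t = 0 := by
            simp only [hV]
            split_ifs with h1 h2 h3
            · omega
            · rfl
            · omega
            · rfl
          rw [hz, mul_zero]
      show (∑ j ∈ range (l+n+2), cN j * V j t) ∈ Set.Icc βmin βmax
      have hc : cN (l+1) = c ⟨l+1, by omega⟩ := by
        simp only [hcN]; rw [dif_pos]
      rw [hsingle, hc]
      exact hc0
  choose! θ hθ1 hθ2 hθ3 using main
  refine ⟨θ, fun t ht => hθ1 t ht, fun t ht ξ _ => ?_, fun t ht => hθ3 t ht⟩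
  exact (hθ2 t ht ξ).trans (hBmono t T ht.le)
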